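/- Finite-memory bond-dimension bound (tensor-level content of Corollary 1). Let V be a finite-dimensional real vector space, q ≥ 1, T ≥ 1, and C : (Fin T → Fin q) → V. Suppose C has memory length m in the sense that for every cut τ with 1 ≤ τ ≤ T−1 and any two past tuples p, p' : Fin τ → Fin q that agree on their last min(τ, m) coordinates (i.e., p_s = p'_s for all s with τ − min(τ,m) < s ≤ τ), the column functions coincide: C (p⌢f) = C (p'⌢f) for every future tuple f. Then for every such τ the cut-τ unfolding rank satisfies R_τ ≤ q ^ (min τ m); consequently C admits a matrix-product representation as in the MPS existence theorem whose bond dimension at every cut τ is at most q ^ (min τ m). -/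
import Mathlib


/-- Concatenate a past tuple `p` (times `1,…,τ`) with a future tuple `f`
(times `τ+1,…,T`) into a full index tuple of length `T`. -/
def glueTuple (q T τ : ℕ) (p : Fin τ → Fin q) (f : Fin (T - τ) → Fin q) :
    Fin T → Fin q :=
  fun i => if h : i.val < τ then p ⟨i.val, h⟩
           else f ⟨i.val - τ, by have := i.isLt; omega⟩

/-- The column function of a past tuple `p`:
`f ↦ C (p ⌢ f)`, an element of `(Fin (T - τ) → Fin q) → V`. -/
def columnFun (q T : ℕ) {V : Type*} [AddCommGroup V] [Module ℝ V]
    (C : (Fin T → Fin q) → V) (τ : ℕ) (p : Fin τ → Fin q) :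
    (Fin (T - τ) → Fin q) → V :=
  fun f => C (glueTuple q T τ p f)

/-- The cut-`τ` unfolding rank of a tensor `C : (Fin T → Fin q) → V`: the
dimension of the span of the column functions of all past tuples. -/
noncomputable def unfoldingRank (q T : ℕ) {V : Type*} [AddCommGroup V] [Module ℝ V]
    (C : (Fin T → Fin q) → V) (τ : ℕ) : ℕ :=
  Module.finrank ℝ
    (Submodule.span ℝ (Set.range (fun p : Fin τ → Fin q => columnFun q T C τ p)))

def lastState (q m τ : ℕ) (w : Fin τ → Fin q) : Fin (min τ m) → Fin q :=
  fun i => w ⟨τ - min τ m + i.val, by have := i.isLt; omega⟩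

def extendState (q m τ : ℕ) (hq : 0 < q) (s : Fin (min τ m) → Fin q) : Fin τ → Fin q :=
  fun j => if h : τ - min τ m ≤ j.val then s ⟨j.val - (τ - min τ m), by have := j.isLt; omega⟩
           else ⟨0, hq⟩

lemma extendState_lastState (q m τ : ℕ) (hq : 0 < q) (w : Fin τ → Fin q)
    (j : Fin τ) (h : τ - min τ m ≤ j.val) :
    extendState q m τ hq (lastState q m τ w) j = w j := by
  simp only [extendState, lastState, dif_pos h]
  congr 1
  apply Fin.ext
  simp only []
  have := j.isLt
  omega

def stepFun (q m t : ℕ) (s : Fin (min t m) → Fin q) (x : Fin q) :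
    Fin (min (t+1) m) → Fin q :=
  fun k => if h : k.val + 1 < min (t+1) m
    then s ⟨k.val + 1 + min t m - min (t+1) m, by omega⟩
    else x

def prefTuple (q T : ℕ) (φ : Fin T → Fin q) (τ : ℕ) (h : τ ≤ T) : Fin τ → Fin q :=
  fun i => φ ⟨i.val, lt_of_lt_of_le i.isLt h⟩

lemma lastState_succ (q m t : ℕ) (w : Fin (t+1) → Fin q) :
    lastState q m (t+1) w
      = stepFun q m t (lastState q m t (fun i => w i.castSucc)) (w (Fin.last t)) := by
  funext k
  have hk := k.isLt
  simp only [lastState, stepFun]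
  split
  · rename_i h
    congr 1
    apply Fin.ext
    simp only [Fin.coe_castSucc, Fin.val_mk]
    omega
  · rename_i h
    congr 1
    apply Fin.ext
    simp only [Fin.val_last, Fin.val_mk]
    omega

/-- transfer matrices of the finite-memory automaton. -/
def mpsA (q m : ℕ) : (t : ℕ) → Fin q → Matrix (Fin (q ^ min t m)) (Fin (q ^ min (t-1) m)) ℝ
  | 0, _ => 0
  | (t+1), x => Matrix.of fun j i =>
      if finFunctionFinEquiv.symm j = stepFun q m t (finFunctionFinEquiv.symm i) x
      then (1 : ℝ) else 0

def mpsV (q T m : ℕ) (hq : 0 < q) {V : Type*} [AddCommGroup V] [Module ℝ V]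
    (C : (Fin T → Fin q) → V) : Fin q → Fin (q ^ min (T-1) m) → V :=
  fun x j => C (glueTuple q T (T-1)
      (extendState q m (T-1) hq (finFunctionFinEquiv.symm j)) (fun _ => x))

/-- **Finite-memory bond-dimension bound** (tensor-level content of Corollary 1):
if the column functions of a tensor `C` only depend on the last `min τ m`
coordinates of the past tuple, then every cut-`τ` unfolding rank is at most
`q ^ (min τ m)`, and `C` admits a matrix-product representation whose bond
dimension at every cut `τ` is at most `q ^ (min τ m)`. -/
theorem finite_memory_bond_bound (q T m : ℕ) (hq : 1 ≤ q) (hT : 1 ≤ T)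
    {V : Type*} [AddCommGroup V] [Module ℝ V] [FiniteDimensional ℝ V]
    (C : (Fin T → Fin q) → V)
    (hmem : ∀ τ : ℕ, 1 ≤ τ → τ ≤ T - 1 → ∀ p p' : Fin τ → Fin q,
      (∀ s : Fin τ, τ - min τ m ≤ s.val → p s = p' s) →
      ∀ f : Fin (T - τ) → Fin q, C (glueTuple q T τ p f) = C (glueTuple q T τ p' f)) :
    (∀ τ : ℕ, 1 ≤ τ → τ ≤ T - 1 → unfoldingRank q T C τ ≤ q ^ (min τ m)) ∧
    ∃ D : ℕ → ℕ, D 0 = 1 ∧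
      (∀ τ : ℕ, 1 ≤ τ → τ ≤ T - 1 → D τ ≤ q ^ (min τ m)) ∧
      ∃ (A : (t : ℕ) → Fin q → Matrix (Fin (D t)) (Fin (D (t - 1))) ℝ)
        (v : Fin q → Fin (D (T - 1)) → V),
        ∀ φ : Fin T → Fin q,
          C φ = ∑ a : (τ : Fin T) → Fin (D τ.val),
            (∏ t : Fin (T - 1),
              A (t.val + 1) (φ ⟨t.val, by have := t.isLt; omega⟩)
                (a ⟨t.val + 1, by have := t.isLt; omega⟩)
                (a ⟨t.val, by have := t.isLt; omega⟩))
            • v (φ ⟨T - 1, by omega⟩) (a ⟨T - 1, by omega⟩) := by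
  have hq0 : 0 < q := hq
  constructor
  · -- rank bound
    intro τ h1 h2
    classical
    have hcol : ∀ p : Fin τ → Fin q,
        columnFun q T C τ p
          = columnFun q T C τ (extendState q m τ hq0 (lastState q m τ p)) := by
      intro p
      funext f
      exact hmem τ h1 h2 p _ (fun s hs => (extendState_lastState q m τ hq0 p s hs).symm) f
    have hsub : Set.range (fun p : Fin τ → Fin q => columnFun q T C τ p)
        ⊆ Set.range (fun s : Fin (min τ m) → Fin q =>
            columnFun q T C τ (extendState q m τ hq0 s)) := by
      rintro _ ⟨p, rfl⟩
      exact ⟨lastState q m τ p, (hcol p).symm⟩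
    unfold unfoldingRank
    calc Module.finrank ℝ
          (Submodule.span ℝ (Set.range (fun p : Fin τ → Fin q => columnFun q T C τ p)))
        ≤ Module.finrank ℝ
          (Submodule.span ℝ (Set.range (fun s : Fin (min τ m) → Fin q =>
            columnFun q T C τ (extendState q m τ hq0 s)))) :=
          Submodule.finrank_mono (Submodule.span_mono hsub)
      _ ≤ q ^ min τ m := by
          refine le_trans (finrank_span_le_card _) ?_
          rw [Set.toFinset_card]
          refine le_trans (Fintype.card_range_le _) ?_
          simp [Fintype.card_fun]
  · -- MPS existence
    refine ⟨fun τ => q ^ min τ m, by simp, fun τ _ _ => le_rfl,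
      mpsA q m, mpsV q T m hq0 C, ?_⟩
    intro φ
    set astar : (τ : Fin T) → Fin (q ^ min τ.val m) :=
      fun τ => finFunctionFinEquiv (lastState q m τ.val (prefTuple q T φ τ.val τ.isLt.le))
      with hastar
    -- the product is a boolean indicator
    have hprod : ∀ a : (τ : Fin T) → Fin (q ^ min τ.val m),
        (∏ t : Fin (T - 1),
          mpsA q m (t.val + 1) (φ ⟨t.val, by have := t.isLt; omega⟩)
            (a ⟨t.val + 1, by have := t.isLt; omega⟩)
            (a ⟨t.val, by have := t.isLt; omega⟩))
        = if (∀ t : Fin (T - 1),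
              finFunctionFinEquiv.symm (a ⟨t.val + 1, by have := t.isLt; omega⟩)
                = stepFun q m t.val
                    (finFunctionFinEquiv.symm (a ⟨t.val, by have := t.isLt; omega⟩))
                    (φ ⟨t.val, by have := t.isLt; omega⟩))
          then (1:ℝ) else 0 := by
      intro a
      have hfac : ∀ t : Fin (T - 1),
          mpsA q m (t.val + 1) (φ ⟨t.val, by have := t.isLt; omega⟩)
            (a ⟨t.val + 1, by have := t.isLt; omega⟩)
            (a ⟨t.val, by have := t.isLt; omega⟩)
          = if finFunctionFinEquiv.symm (a ⟨t.val + 1, by have := t.isLt; omega⟩)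
                = stepFun q m t.val
                    (finFunctionFinEquiv.symm (a ⟨t.val, by have := t.isLt; omega⟩))
                    (φ ⟨t.val, by have := t.isLt; omega⟩)
            then (1:ℝ) else 0 := fun t => rfl
      rw [Finset.prod_congr rfl (fun t _ => hfac t), Fintype.prod_boole]
      congr!
    -- the indicator condition pins down `a = astar`
    have hkey : ∀ a : (τ : Fin T) → Fin (q ^ min τ.val m),
        (∀ t : Fin (T - 1),
          finFunctionFinEquiv.symm (a ⟨t.val + 1, by have := t.isLt; omega⟩)
            = stepFun q m t.val
                (finFunctionFinEquiv.symm (a ⟨t.val, by have := t.isLt; omega⟩))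
                (φ ⟨t.val, by have := t.isLt; omega⟩)) ↔ a = astar := by
      intro a
      constructor
      · intro hcond
        funext τ
        suffices h : ∀ n (hn : n < T), a ⟨n, hn⟩ = astar ⟨n, hn⟩ by
          have := h τ.val τ.isLt
          simpa using this
        intro n
        induction n with
        | zero =>
            intro hn
            apply Fin.ext
            have h1 := (a ⟨0, hn⟩).isLt
            have h2 := (astar ⟨0, hn⟩).isLt
            simp only [Nat.min_zero, Nat.zero_min, pow_zero] at h1 h2
            omega
        | succ n ih =>
            intro hn
            have hn' : n < T := by omega
            have hT1 : n < T - 1 := by omega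
            have hc := hcond ⟨n, hT1⟩
            have hihs := ih hn'
            apply finFunctionFinEquiv.symm.injective
            rw [hc, hihs]
            have hrec : lastState q m (n+1) (prefTuple q T φ (n+1) (by omega))
                = stepFun q m n (lastState q m n (prefTuple q T φ n (by omega)))
                    (φ ⟨n, hn'⟩) := by
              rw [lastState_succ q m n (prefTuple q T φ (n+1) (by omega))]
              rfl
            simp only [hastar, Equiv.symm_apply_apply]
            exact hrec.symm
      · rintro rfl
        intro t
        simp only [hastar, Equiv.symm_apply_apply]
        have ht := t.isLt
        have hrec : lastState q m (t.val+1) (prefTuple q T φ (t.val+1) (by omega))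
            = stepFun q m t.val (lastState q m t.val (prefTuple q T φ t.val (by omega)))
                (φ ⟨t.val, by omega⟩) := by
          rw [lastState_succ q m t.val (prefTuple q T φ (t.val+1) (by omega))]
          rfl
        exact hrec
    -- evaluate the sum
    have hsum : (∑ a : (τ : Fin T) → Fin (q ^ min τ.val m),
        (∏ t : Fin (T - 1),
          mpsA q m (t.val + 1) (φ ⟨t.val, by have := t.isLt; omega⟩)
            (a ⟨t.val + 1, by have := t.isLt; omega⟩)
            (a ⟨t.val, by have := t.isLt; omega⟩))
        • mpsV q T m hq0 C (φ ⟨T - 1, by omega⟩) (a ⟨T - 1, by omega⟩))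
        = mpsV q T m hq0 C (φ ⟨T - 1, by omega⟩) (astar ⟨T - 1, by omega⟩) := by
      rw [Finset.sum_eq_single astar]
      · rw [hprod, if_pos ((hkey astar).mpr rfl), one_smul]
      · intro a _ hne
        rw [hprod, if_neg (fun h => hne ((hkey a).mp h)), zero_smul]
      · intro h
        exact absurd (Finset.mem_univ _) h
    rw [hsum]
    -- final: the value at the canonical trajectory is `C φ`
    have hdec : finFunctionFinEquiv.symm (astar ⟨T - 1, by omega⟩)
        = lastState q m (T-1) (prefTuple q T φ (T-1) (by omega)) := by
      simp only [hastar, Equiv.symm_apply_apply]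
    show C φ = mpsV q T m hq0 C (φ ⟨T - 1, by omega⟩) (astar ⟨T - 1, by omega⟩)
    unfold mpsV
    rw [hdec]
    have hglue : glueTuple q T (T-1) (prefTuple q T φ (T-1) (by omega))
        (fun _ => φ ⟨T - 1, by omega⟩) = φ := by
      funext i
      have hi := i.isLt
      unfold glueTuple prefTuple
      split
      · exact congrArg φ (Fin.ext rfl)
      · rename_i h
        exact congrArg φ (Fin.ext (by simp; omega))
    rcases Nat.eq_or_lt_of_le hT with hT1 | hT2
    · -- T = 1 : past is empty, no memory hypothesis needed
      refine congrArg C (funext fun j => ?_)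
      show φ j = glueTuple q T (T-1) _ _ j
      unfold glueTuple
      rw [dif_neg (by omega)]
      exact congrArg φ (Fin.ext (by have := j.isLt; omega))
    · -- T ≥ 2 : use the memory hypothesis at cut T-1
      have := hmem (T-1) (by omega) le_rfl
        (extendState q m (T-1) hq0
          (lastState q m (T-1) (prefTuple q T φ (T-1) (by omega))))
        (prefTuple q T φ (T-1) (by omega))
        (fun s hs => extendState_lastState q m (T-1) hq0 _ s hs)
        (fun _ => φ ⟨T - 1, by omega⟩)
      rw [this, hglue]
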